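/- Let A, B ∈ ℂ^{m×n}. The matrix equation A·X = B has a positive semi-definite solution X ∈ ℂ^{n×n} if and only if range(B) ⊆ range(A), A·B* ≥ 0, and r(A·B*) = r(B). In this case every solution of the form X = B*·(A·B*)†·B + F_A·U·F_A with U ≥ 0 Hermitian is a positive semi-definite solution of A·X = B. -/

import Mathlib

open Matrix ComplexOrder

/-- `X` satisfies the four Penrose equations for `A`, i.e. `X` is the
Moore–Penrose inverse of `A`. -/
def IsMP {m n : Type*} [Fintype m] [Fintype n]
    (A : Matrix m n ℂ) (X : Matrix n m ℂ) : Prop :=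
  A * X * A = A ∧ X * A * X = X ∧ (A * X)ᴴ = A * X ∧ (X * A)ᴴ = X * A

/-- the number of positive eigenvalues (with multiplicity) of a Hermitian matrix -/
noncomputable def iPos {n : Type*} [Fintype n] [DecidableEq n] {A : Matrix n n ℂ}
    (hA : A.IsHermitian) : ℕ := Nat.card {i // 0 < hA.eigenvalues i}

/-- the number of negative eigenvalues (with multiplicity) of a Hermitian matrix -/
noncomputable def iNeg {n : Type*} [Fintype n] [DecidableEq n] {A : Matrix n n ℂ}
    (hA : A.IsHermitian) : ℕ := Nat.card {i // hA.eigenvalues i < 0}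

/-- uniqueness of the Moore–Penrose inverse -/
lemma mp_unique {k l : Type*} [Fintype k] [Fintype l]
    (M : Matrix k l ℂ) (X Y : Matrix l k ℂ) (hX : IsMP M X) (hY : IsMP M Y) : X = Y := by
  obtain ⟨hX1, hX2, hX3, hX4⟩ := hX
  obtain ⟨hY1, hY2, hY3, hY4⟩ := hY
  have hMX : M * X = M * Y := by
    calc M * X = (M * X)ᴴ := hX3.symm
      _ = Xᴴ * Mᴴ := by rw [conjTranspose_mul]
      _ = Xᴴ * (M * Y * M)ᴴ := by rw [hY1]
      _ = Xᴴ * (Mᴴ * (M * Y)ᴴ) := by rw [conjTranspose_mul]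
      _ = (Xᴴ * Mᴴ) * (M * Y)ᴴ := by rw [Matrix.mul_assoc]
      _ = (M * X)ᴴ * (M * Y) := by rw [← conjTranspose_mul M X, hY3]
      _ = (M * X) * (M * Y) := by rw [hX3]
      _ = ((M * X) * M) * Y := by simp only [Matrix.mul_assoc]
      _ = M * Y := by rw [hX1]
  have hXM : X * M = Y * M := by
    calc X * M = (X * M)ᴴ := hX4.symm
      _ = Mᴴ * Xᴴ := by rw [conjTranspose_mul]
      _ = (M * (Y * M))ᴴ * Xᴴ := by rw [← Matrix.mul_assoc, hY1]
      _ = ((Y * M)ᴴ * Mᴴ) * Xᴴ := by rw [conjTranspose_mul]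
      _ = (Y * M)ᴴ * (Mᴴ * Xᴴ) := by rw [Matrix.mul_assoc]
      _ = (Y * M) * (X * M)ᴴ := by rw [hY4, ← conjTranspose_mul X M]
      _ = (Y * M) * (X * M) := by rw [hX4]
      _ = Y * ((M * X) * M) := by simp only [Matrix.mul_assoc]
      _ = Y * M := by rw [hX1]
  calc X = X * M * X := hX2.symm
    _ = X * (M * Y) := by rw [Matrix.mul_assoc, hMX]
    _ = (X * M) * Y := by rw [Matrix.mul_assoc]
    _ = (Y * M) * Y := by rw [hXM]
    _ = Y := hY2

/-- matrices agreeing on all `mulVec` are equal -/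
lemma ext_mulVec {k l : Type*} [Fintype l] [DecidableEq l] {P Q : Matrix k l ℂ}
    (h : ∀ x : l → ℂ, P *ᵥ x = Q *ᵥ x) : P = Q := by
  ext i j
  have := congrFun (h (Pi.single j 1)) i
  simpa [Matrix.mulVec_single] using this

/-- for `S` positive semidefinite, `ker (S * (S * D)) = ker (S * D)` -/
lemma ker_sq {k l : Type*} [Fintype k] [Fintype l] [DecidableEq l]
    {S : Matrix k k ℂ} (hS : S.PosSemidef) (D : Matrix k l ℂ) :
    LinearMap.ker (S * (S * D)).mulVecLin = LinearMap.ker (S * D).mulVecLin := by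
  apply le_antisymm
  · intro x hx
    simp only [LinearMap.mem_ker, mulVecLin_apply] at hx ⊢
    have hx' : S *ᵥ (S *ᵥ (D *ᵥ x)) = 0 := by
      rw [Matrix.mulVec_mulVec, Matrix.mulVec_mulVec, Matrix.mul_assoc]
      exact hx
    have hww : star (S *ᵥ (D *ᵥ x)) ⬝ᵥ (S *ᵥ (D *ᵥ x)) = 0 := by
      rw [Matrix.star_mulVec, ← Matrix.dotProduct_mulVec, hS.isHermitian.eq, hx',
        dotProduct_zero]
    have hw0 : S *ᵥ (D *ᵥ x) = 0 := dotProduct_star_self_eq_zero.mp hww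
    rw [← Matrix.mulVec_mulVec]
    exact hw0
  · intro x hx
    simp only [LinearMap.mem_ker, mulVecLin_apply] at hx ⊢
    rw [← Matrix.mulVec_mulVec, hx, Matrix.mulVec_zero]

lemma rank_S_sq {k l : Type*} [Fintype k] [Fintype l] [DecidableEq k] [DecidableEq l]
    {S : Matrix k k ℂ} (hS : S.PosSemidef) (D : Matrix k l ℂ) :
    (S * (S * D)).rank = (S * D).rank := by
  have h1 := LinearMap.finrank_range_add_finrank_ker (S * (S * D)).mulVecLin
  have h2 := LinearMap.finrank_range_add_finrank_ker (S * D).mulVecLin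
  rw [ker_sq hS D] at h1
  unfold Matrix.rank
  omega

open scoped MatrixOrder in
lemma psd_sqrt_exists {k : Type*} [Fintype k] [DecidableEq k] {X : Matrix k k ℂ}
    (hX : X.PosSemidef) : ∃ S : Matrix k k ℂ, S.PosSemidef ∧ S * S = X :=
  ⟨CFC.sqrt X, (CFC.sqrt_nonneg X).posSemidef, CFC.sqrt_mul_sqrt_self X hX.nonneg⟩

theorem stmt9 (m n : ℕ) (A B : Matrix (Fin m) (Fin n) ℂ)
    (Ad : Matrix (Fin n) (Fin m) ℂ) (hAd : IsMP A Ad)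
    (G : Matrix (Fin m) (Fin m) ℂ) (hG : IsMP (A * Bᴴ) G) :
    ((∃ X : Matrix (Fin n) (Fin n) ℂ, X.PosSemidef ∧ A * X = B) ↔
      (LinearMap.range B.mulVecLin ≤ LinearMap.range A.mulVecLin ∧
        (A * Bᴴ).PosSemidef ∧ (A * Bᴴ).rank = B.rank)) ∧
    ((LinearMap.range B.mulVecLin ≤ LinearMap.range A.mulVecLin ∧
        (A * Bᴴ).PosSemidef ∧ (A * Bᴴ).rank = B.rank) →
      ∀ U : Matrix (Fin n) (Fin n) ℂ, U.PosSemidef →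
        (Bᴴ * G * B + (1 - Ad * A) * U * (1 - Ad * A)).PosSemidef ∧
        A * (Bᴴ * G * B + (1 - Ad * A) * U * (1 - Ad * A)) = B) := by
  -- The backward/second part
  have part2 : (LinearMap.range B.mulVecLin ≤ LinearMap.range A.mulVecLin ∧
        (A * Bᴴ).PosSemidef ∧ (A * Bᴴ).rank = B.rank) →
      ∀ U : Matrix (Fin n) (Fin n) ℂ, U.PosSemidef →
        (Bᴴ * G * B + (1 - Ad * A) * U * (1 - Ad * A)).PosSemidef ∧
        A * (Bᴴ * G * B + (1 - Ad * A) * U * (1 - Ad * A)) = B := by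
    rintro ⟨_, hPSD, hrank⟩ U hU
    set M := A * Bᴴ with hM
    have hMh : Mᴴ = M := hPSD.isHermitian
    obtain ⟨h1, h2, h3, h4⟩ := hG
    -- G is Hermitian
    have e3 : Gᴴ * M = M * G := by
      calc Gᴴ * M = Gᴴ * Mᴴ := by rw [hMh]
        _ = (M * G)ᴴ := (conjTranspose_mul M G).symm
        _ = M * G := h3
    have e4 : M * Gᴴ = G * M := by
      calc M * Gᴴ = Mᴴ * Gᴴ := by rw [hMh]
        _ = (G * M)ᴴ := (conjTranspose_mul G M).symm
        _ = G * M := h4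
    have hGmp' : IsMP M Gᴴ := by
      refine ⟨?_, ?_, ?_, ?_⟩
      · have t1 : M * (Gᴴ * M) = M := by
          have := congrArg conjTranspose h1
          simpa [conjTranspose_mul, hMh, Matrix.mul_assoc] using this
        simpa [Matrix.mul_assoc] using t1
      · have t2 : Gᴴ * (M * Gᴴ) = Gᴴ := by
          have := congrArg conjTranspose h2
          simpa [conjTranspose_mul, hMh, Matrix.mul_assoc] using this
        simpa [Matrix.mul_assoc] using t2
      · rw [e4]; exact h4
      · rw [e3]; exact h3
    have hGh : Gᴴ = G := mp_unique M Gᴴ G hGmp' ⟨h1, h2, h3, h4⟩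
    have hGpsd : G.PosSemidef := by
      have hGe : G = Gᴴ * M * G := by rw [hGh, h2]
      rw [hGe]
      exact hPSD.conjTranspose_mul_mul_same G
    -- key identity : M * G * B = B
    have hrangeMB : LinearMap.range M.mulVecLin = LinearMap.range B.mulVecLin := by
      have hle : LinearMap.range M.mulVecLin ≤ LinearMap.range B.mulVecLin := by
        have hM' : M = B * Aᴴ := by
          rw [← hMh, hM, conjTranspose_mul, conjTranspose_conjTranspose]
        rw [hM', Matrix.mulVecLin_mul]
        exact LinearMap.range_comp_le_range _ _
      exact Submodule.eq_of_le_of_finrank_eq hle hrank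
    have hkey : M * G * B = B := by
      apply ext_mulVec
      intro x
      have hBx : B *ᵥ x ∈ LinearMap.range M.mulVecLin := by
        rw [hrangeMB]; exact ⟨x, rfl⟩
      obtain ⟨y, hy⟩ := hBx
      simp only [mulVecLin_apply] at hy
      calc (M * G * B) *ᵥ x = (M * G) *ᵥ (B *ᵥ x) := by
            rw [Matrix.mulVec_mulVec]
        _ = (M * G) *ᵥ (M *ᵥ y) := by rw [hy]
        _ = (M * G * M) *ᵥ y := by rw [Matrix.mulVec_mulVec]
        _ = M *ᵥ y := by rw [h1]
        _ = B *ᵥ x := hy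
    constructor
    · apply Matrix.PosSemidef.add
      · exact hGpsd.conjTranspose_mul_mul_same B
      · have hFh : (1 - Ad * A)ᴴ = 1 - Ad * A := by
          rw [conjTranspose_sub, conjTranspose_one, hAd.2.2.2]
        have := hU.conjTranspose_mul_mul_same (1 - Ad * A)
        rwa [hFh] at this
    · have hAF : A * (1 - Ad * A) = 0 := by
        rw [Matrix.mul_sub, Matrix.mul_one, ← Matrix.mul_assoc, hAd.1, sub_self]
      have hA0 : A * ((1 - Ad * A) * U * (1 - Ad * A)) = 0 := by
        rw [Matrix.mul_assoc (1 - Ad * A) U (1 - Ad * A), ← Matrix.mul_assoc, hAF,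
          Matrix.zero_mul]
      rw [Matrix.mul_add, hA0, add_zero, ← Matrix.mul_assoc, ← Matrix.mul_assoc]
      exact hkey
  refine ⟨⟨?_, fun h => ⟨_, part2 h 0 Matrix.PosSemidef.zero⟩⟩, part2⟩
  rintro ⟨X, hX, hAX⟩
  have hXh : Xᴴ = X := hX.isHermitian
  obtain ⟨S, hSpsd, hSS⟩ := psd_sqrt_exists hX
  have hSh : Sᴴ = S := hSpsd.isHermitian
  refine ⟨?_, ?_, ?_⟩
  · rw [← hAX, Matrix.mulVecLin_mul]
    exact LinearMap.range_comp_le_range _ _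
  · rw [← hAX, conjTranspose_mul, hXh, ← Matrix.mul_assoc]
    exact hX.mul_mul_conjTranspose_same A
  · -- rank (A * Bᴴ) = rank B
    have h1 : A * Bᴴ = (A * S) * (A * S)ᴴ := by
      rw [← hAX, conjTranspose_mul, hXh, conjTranspose_mul, hSh, ← hSS]
      simp only [Matrix.mul_assoc]
    have h2 : (A * Bᴴ).rank = (A * S).rank := by
      rw [h1, Matrix.rank_self_mul_conjTranspose]
    have h3 : B.rank = (S * (S * Aᴴ)).rank := by
      rw [← Matrix.rank_conjTranspose B, ← hAX, conjTranspose_mul, hXh, ← hSS,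
        Matrix.mul_assoc]
    have h4 : (S * (S * Aᴴ)).rank = (S * Aᴴ).rank := rank_S_sq hSpsd Aᴴ
    have h5 : (A * S).rank = (S * Aᴴ).rank := by
      rw [← Matrix.rank_conjTranspose (A * S), conjTranspose_mul, hSh]
    rw [h2, h3, h4, h5]
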